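/- Let I ⊆ ℝ be an interval, p ∈ ℕ, d ∈ ℕᵖ, α ∈ ℕ_p^d, and let 𝐌 = (M₁,…,M_p) be a d-averaging mapping on I with each Mᵢ continuous and strict, such that the root graph 𝓡(G_α) is ergodic, and let K_α be the unique 𝐌_α-invariant mean. If each of M₁,…,M_p is nondecreasing with respect to each of its variables, then K_α is nondecreasing with respect to each of its variables. -/

import Mathlib

/-- There is a walk of length exactly `n` from `v` to `w` in the digraph with edge relation `E`. -/
def HasWalkOfLength {V : Type*} (E : V → V → Prop) (v w : V) (n : ℕ) : Prop :=
  ∃ f : ℕ → V, f 0 = v ∧ f n = w ∧ ∀ i < n, E (f i) (f (i + 1))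

/-- `v ⇝ w` : there is a walk (of some length, possibly `0`) from `v` to `w`. -/
def Reaches {V : Type*} (E : V → V → Prop) : V → V → Prop :=
  Relation.ReflTransGen E

/-- The equivalence relation whose classes are the strongly connected components:
`v ∼ w` iff there are walks from `v` to `w` and from `w` to `v`. -/
def SCCSetoid {V : Type*} (E : V → V → Prop) : Setoid V where
  r v w := Reaches E v w ∧ Reaches E w v
  iseqv := ⟨fun _ => ⟨Relation.ReflTransGen.refl, Relation.ReflTransGen.refl⟩,
    fun h => ⟨h.2, h.1⟩,
    fun h h' => ⟨Relation.ReflTransGen.trans h.1 h'.1, Relation.ReflTransGen.trans h'.2 h.2⟩⟩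

/-- The edge relation of the quotient digraph `G^SCC` of strongly connected components :
`(P, Q)` is an edge iff `P ≠ Q` and there is an edge `(a, b) ∈ E` with `a ∈ P`, `b ∈ Q`. -/
def SCCEdge {V : Type*} (E : V → V → Prop) (P Q : Quotient (SCCSetoid E)) : Prop :=
  P ≠ Q ∧ ∃ a b : V, Quotient.mk (SCCSetoid E) a = P ∧ Quotient.mk (SCCSetoid E) b = Q ∧ E a b

/-- The root `R(G)`: the union of the strongly connected components having no
incoming edge in `G^SCC` (i.e. lying in the source of `G^SCC`). -/
def Root {V : Type*} (E : V → V → Prop) : Set V :=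
  {v | ∀ P, ¬ SCCEdge E P (Quotient.mk (SCCSetoid E) v)}

/-- `f` restricted to `{0,…,n}` is a cycle: a nonempty walk in which only the first and
last vertices are equal. -/
def IsCycle {V : Type*} (E : V → V → Prop) (f : ℕ → V) (n : ℕ) : Prop :=
  0 < n ∧ (∀ i < n, E (f i) (f (i + 1))) ∧ f 0 = f n ∧
    ∀ i j, i < j → j ≤ n → f i = f j → i = 0 ∧ j = n

/-- A digraph is aperiodic if no integer `k > 1` divides the length of every cycle. -/
def IsAperiodic {V : Type*} (E : V → V → Prop) : Prop :=
  ¬ ∃ k : ℕ, 1 < k ∧ ∀ (f : ℕ → V) (n : ℕ), IsCycle E f n → k ∣ n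

/-- A digraph is ergodic if it is nonempty, irreducible and aperiodic. -/
def IsErgodic {V : Type*} (E : V → V → Prop) : Prop :=
  Nonempty V ∧ (∀ v w : V, Reaches E v w) ∧ IsAperiodic E

/-- `M` is a mean on the interval `I ⊆ ℝ` (indexed by the finite index type `ι`):
`min x ≤ M x ≤ max x` for every `x : ι → I`. -/
def IsMeanOn (I : Set ℝ) {ι : Type*} [Fintype ι] (M : (ι → I) → I) : Prop :=
  ∀ (x : ι → I) (h : (Finset.univ : Finset ι).Nonempty),
    Finset.univ.inf' h (fun i => (x i : ℝ)) ≤ (M x : ℝ) ∧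
      (M x : ℝ) ≤ Finset.univ.sup' h (fun i => (x i : ℝ))

/-- `M` is a strict mean on `I`: it is a mean, and `min x < M x < max x`
whenever `x` is nonconstant. -/
def IsStrictMeanOn (I : Set ℝ) {ι : Type*} [Fintype ι] (M : (ι → I) → I) : Prop :=
  IsMeanOn I M ∧ ∀ (x : ι → I) (h : (Finset.univ : Finset ι).Nonempty),
    (∃ i j, x i ≠ x j) →
      Finset.univ.inf' h (fun i => (x i : ℝ)) < (M x : ℝ) ∧
        (M x : ℝ) < Finset.univ.sup' h (fun i => (x i : ℝ))

/-- The mean-type mapping `𝐌_α : Iᵖ → Iᵖ`, whose `i`-th coordinate is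
`Mᵢ(x_{α_{i,1}}, …, x_{α_{i,dᵢ}})`. -/
def MeanTypeMap {I : Set ℝ} {p : ℕ} (d : Fin p → ℕ) (M : ∀ i, (Fin (d i) → I) → I)
    (α : ∀ i, Fin (d i) → Fin p) : (Fin p → I) → (Fin p → I) :=
  fun x i => M i fun j => x (α i j)

/-- The edge relation of the α-incidence graph `G_α` on `{1,…,p}`:
edges are the pairs `(α_{i,j}, i)`. -/
def IncidenceE {p : ℕ} (d : Fin p → ℕ) (α : ∀ i, Fin (d i) → Fin p) :
    Fin p → Fin p → Prop :=
  fun a b => ∃ j : Fin (d b), α b j = a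

/-- If `𝐌 = (M₁,…,M_p)` is a `d`-averaging mapping on an interval `I` with all `Mᵢ`
continuous and strict, the root graph `𝓡(G_α)` is ergodic, and `K` is the unique
`𝐌_α`-invariant mean, then: if every `Mᵢ` is nondecreasing with respect to each of its
variables, then so is `K`. -/
theorem stmt_13 {I : Set ℝ} (hI : I.OrdConnected) {p : ℕ} (hp : 0 < p)
    (d : Fin p → ℕ) (hd : ∀ i, 0 < d i)
    (M : ∀ i, (Fin (d i) → I) → I)
    (hstrict : ∀ i, IsStrictMeanOn I (M i)) (hcont : ∀ i, Continuous (M i))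
    (α : ∀ i, Fin (d i) → Fin p)
    (herg : IsErgodic
      (fun a b : (Root (IncidenceE d α) : Set (Fin p)) => IncidenceE d α a b))
    (K : (Fin p → I) → I) (hK : IsMeanOn I K)
    (hKinv : ∀ x, K (MeanTypeMap d M α x) = K x)
    (hKuniq : ∀ L : (Fin p → I) → I, IsMeanOn I L →
      (∀ x, L (MeanTypeMap d M α x) = L x) → L = K)
    (hmono : ∀ i, ∀ x y : Fin (d i) → I, (∀ j, (x j : ℝ) ≤ (y j : ℝ)) →
      (M i x : ℝ) ≤ (M i y : ℝ)) :
    ∀ x y : Fin p → I, (∀ i, (x i : ℝ) ≤ (y i : ℝ)) → (K x : ℝ) ≤ (K y : ℝ) := by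
  have hne : (Finset.univ : Finset (Fin p)).Nonempty := ⟨⟨0, hp⟩, Finset.mem_univ _⟩
  set F := MeanTypeMap d M α with hF
  have hcoordle : ∀ (z : Fin p → I) (i : Fin p),
      ((F z) i : ℝ) ≤ Finset.univ.sup' hne (fun k => (z k : ℝ)) := by
    intro z i
    have hni : (Finset.univ : Finset (Fin (d i))).Nonempty := ⟨⟨0, hd i⟩, Finset.mem_univ _⟩
    refine le_trans (((hstrict i).1 (fun j => z (α i j)) hni).2) ?_
    exact Finset.sup'_le _ _ fun j _ => Finset.le_sup' (fun k => ((z k : ℝ))) (Finset.mem_univ (α i j))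
  have hcoordge : ∀ (z : Fin p → I) (i : Fin p),
      Finset.univ.inf' hne (fun k => (z k : ℝ)) ≤ ((F z) i : ℝ) := by
    intro z i
    have hni : (Finset.univ : Finset (Fin (d i))).Nonempty := ⟨⟨0, hd i⟩, Finset.mem_univ _⟩
    refine le_trans ?_ (((hstrict i).1 (fun j => z (α i j)) hni).1)
    exact Finset.le_inf' _ _ fun j _ => Finset.inf'_le (fun k => ((z k : ℝ))) (Finset.mem_univ (α i j))
  -- iterates stay above the min
  have hiter_ge : ∀ (n : ℕ) (z : Fin p → I) (i : Fin p),
      Finset.univ.inf' hne (fun k => (z k : ℝ)) ≤ ((F^[n] z) i : ℝ) := by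
    intro n
    induction n with
    | zero => intro z i; exact Finset.inf'_le (fun k => ((z k : ℝ))) (Finset.mem_univ i)
    | succ n ih =>
      intro z i
      rw [Function.iterate_succ_apply']
      refine le_trans ?_ (hcoordge (F^[n] z) i)
      exact Finset.le_inf' _ _ fun k _ => ih z k
  -- the sequence of maxima
  set a : ℕ → (Fin p → I) → ℝ :=
    fun n z => Finset.univ.sup' hne (fun i => ((F^[n] z) i : ℝ)) with ha
  have ha_succ : ∀ (n : ℕ) (z : Fin p → I), a (n + 1) z ≤ a n z := by
    intro n z
    simp only [ha, Function.iterate_succ_apply']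
    exact Finset.sup'_le _ _ fun i _ => hcoordle (F^[n] z) i
  have ha_lb : ∀ (n : ℕ) (z : Fin p → I),
      Finset.univ.inf' hne (fun k => (z k : ℝ)) ≤ a n z := by
    intro n z
    exact le_trans (hiter_ge n z ⟨0, hp⟩)
      (Finset.le_sup' (fun i => ((F^[n] z i : ℝ))) (Finset.mem_univ ⟨0, hp⟩))
  have hbdd : ∀ z : Fin p → I, BddBelow (Set.range fun n => a n z) := by
    intro z
    exact ⟨_, by rintro _ ⟨n, rfl⟩; exact ha_lb n z⟩
  have ha_zero : ∀ z : Fin p → I, a 0 z = Finset.univ.sup' hne (fun k => (z k : ℝ)) := by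
    intro z; simp [ha]
  have hlb : ∀ z : Fin p → I, Finset.univ.inf' hne (fun k => (z k : ℝ)) ≤ ⨅ n, a n z :=
    fun z => le_ciInf fun n => ha_lb n z
  have hub : ∀ z : Fin p → I, (⨅ n, a n z) ≤ Finset.univ.sup' hne (fun k => (z k : ℝ)) :=
    fun z => le_trans (ciInf_le (hbdd z) 0) (le_of_eq (ha_zero z))
  have hmem : ∀ z : Fin p → I, (⨅ n, a n z) ∈ I := by
    intro z
    obtain ⟨i0, -, hi0⟩ := Finset.exists_mem_eq_inf' hne (fun k => ((z k : ℝ)))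
    obtain ⟨i1, -, hi1⟩ := Finset.exists_mem_eq_sup' hne (fun k => ((z k : ℝ)))
    have h1 := hlb z
    have h2 := hub z
    rw [hi0] at h1; rw [hi1] at h2
    exact hI.out (z i0).2 (z i1).2 ⟨h1, h2⟩
  set L : (Fin p → I) → I := fun z => ⟨⨅ n, a n z, hmem z⟩ with hL
  have hmeanL : IsMeanOn I L := by
    intro z h
    exact ⟨hlb z, hub z⟩
  have hinvL : ∀ z, L (MeanTypeMap d M α z) = L z := by
    intro z
    apply Subtype.ext
    show (⨅ n, a n (F z)) = ⨅ n, a n z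
    have key : ∀ n, a n (F z) = a (n + 1) z := by
      intro n; simp only [ha, Function.iterate_succ_apply]
    simp only [key]
    apply le_antisymm
    · exact le_ciInf fun n => le_trans
        (ciInf_le ⟨_, by rintro _ ⟨m, rfl⟩; exact ha_lb (m + 1) z⟩ n) (ha_succ n z)
    · exact le_ciInf fun n => ciInf_le (hbdd z) (n + 1)
  have hLK : L = K := hKuniq L hmeanL hinvL
  intro x y hxy
  have hiter_mono : ∀ (n : ℕ) (i : Fin p), ((F^[n] x) i : ℝ) ≤ ((F^[n] y) i : ℝ) := by
    intro n
    induction n with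
    | zero => simpa using hxy
    | succ n ih =>
      intro i
      simp only [Function.iterate_succ_apply']
      exact hmono i _ _ fun j => ih (α i j)
  have ha_mono : ∀ n, a n x ≤ a n y := by
    intro n
    exact Finset.sup'_le _ _ fun i _ => le_trans (hiter_mono n i)
      (Finset.le_sup' (fun k => ((F^[n] y k : ℝ))) (Finset.mem_univ i))
  have hx : (K x : ℝ) = ⨅ n, a n x := by rw [← hLK]
  have hy : (K y : ℝ) = ⨅ n, a n y := by rw [← hLK]
  rw [hx, hy]
  exact ciInf_mono (hbdd x) ha_mono
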